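/- arXiv:1204.3196 — 2 statements merged into one kernel-verified Lean document; each statement's English description precedes it below -/
import Mathlib

section
/- Let A be a discrete valuation ring with quotient field K, maximal ideal m, and residue field k = A/m of characteristic zero. Let R be a domain containing A that is finitely generated and flat as an A-algebra, such that K ⊗_A R ≅ K[t] (polynomial ring in one variable over K) and R/mR ≅ k[t] (polynomial ring in one variable over k). Then R ≅ A[t], a polynomial ring in one variable over A. -/
open Polynomial IsLocalRing

section Sathaye

variable {A R : Type*} [CommRing A] [IsDomain A] [IsDiscreteValuationRing A]
  [CommRing R] [IsDomain R] [Algebra A R]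

theorem sathaye_zpow_rep (π : A) (hπ : Irreducible π) (c : FractionRing A) (hc : c ≠ 0) :
    ∃ (m : ℤ) (w : Aˣ), c = (algebraMap A (FractionRing A) π) ^ m
      * algebraMap A (FractionRing A) w := by
  set φ := algebraMap A (FractionRing A) with hφ
  have hφi : Function.Injective φ := IsFractionRing.injective A (FractionRing A)
  have hP : φ π ≠ 0 := fun h => hπ.ne_zero (hφi (by rw [h, map_zero]))
  obtain ⟨⟨a, s⟩, hs⟩ := IsLocalization.surj (nonZeroDivisors A) c
  simp only at hs
  have hs0 : φ (s : A) ≠ 0 := fun h => nonZeroDivisors.coe_ne_zero s (hφi (by rw [h, map_zero]))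
  have ha0 : a ≠ 0 := by
    rintro rfl
    rw [map_zero] at hs
    exact hc (by rcases mul_eq_zero.mp hs with h | h; exact h; exact absurd h hs0)
  obtain ⟨n, u₁, hu₁⟩ := IsDiscreteValuationRing.eq_unit_mul_pow_irreducible ha0 hπ
  obtain ⟨m, u₂, hu₂⟩ := IsDiscreteValuationRing.eq_unit_mul_pow_irreducible
    (nonZeroDivisors.coe_ne_zero s) hπ
  refine ⟨(n : ℤ) - m, u₁ * u₂⁻¹, ?_⟩
  have hc' : c = φ a / φ (s : A) := by
    rw [eq_div_iff hs0]
    exact hs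
  rw [hc', hu₁, hu₂]
  have h2 : φ ((u₂ : A)) ≠ 0 := fun h => u₂.ne_zero (hφi (by rw [h, map_zero]))
  rw [map_mul, map_mul, map_pow, map_pow]
  rw [div_eq_iff (by exact mul_ne_zero h2 (pow_ne_zero _ hP)), mul_comm (φ (u₂ : A)) ((φ π) ^ m),
    ← mul_assoc]
  have hzn : (φ π) ^ ((n : ℤ) - m) * (φ π) ^ (m : ℤ) = (φ π) ^ (n : ℤ) := by
    rw [← zpow_add₀ hP]; ring_nf
  have hu : φ ((u₁ * u₂⁻¹ : Aˣ) : A) * φ ((u₂ : A)) = φ (u₁ : A) := by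
    rw [← map_mul]
    congr 1
    rw [Units.val_mul, mul_assoc, Units.inv_mul, mul_one]
  have hre : (φ π) ^ ((n : ℤ) - m) * φ ((u₁ * u₂⁻¹ : Aˣ) : A) * (φ π) ^ (m : ℕ) * φ ((u₂ : A))
      = ((φ π) ^ ((n : ℤ) - m) * (φ π) ^ (m : ℤ)) * (φ ((u₁ * u₂⁻¹ : Aˣ) : A) * φ ((u₂ : A))) := by
    rw [zpow_natCast]; ring
  rw [hre, hzn, hu, zpow_natCast]
  ring

theorem sathaye_zpow_nonneg (π : A) (hπ : Irreducible π) {j : ℤ} {w : Aˣ} {a : A}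
    (h : (algebraMap A (FractionRing A) π) ^ j
      * algebraMap A (FractionRing A) (w : A) = algebraMap A (FractionRing A) a) : 0 ≤ j := by
  set φ := algebraMap A (FractionRing A) with hφ
  have hφi : Function.Injective φ := IsFractionRing.injective A (FractionRing A)
  have hP : φ π ≠ 0 := fun h => hπ.ne_zero (hφi (by rw [h, map_zero]))
  by_contra hj
  push_neg at hj
  have hk : ((-j).toNat : ℤ) = -j := Int.toNat_of_nonneg (by omega)
  have : φ (w : A) = φ a * (φ π) ^ ((-j).toNat) := by
    rw [← h]
    rw [← zpow_natCast (φ π) ((-j).toNat), hk]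
    rw [mul_comm ((φ π)^j) (φ (w:A)), mul_assoc, ← zpow_add₀ hP]
    simp
  rw [← map_pow, ← map_mul] at this
  have hwa : (w : A) = a * π ^ ((-j).toNat) := hφi this
  have hdvd : π ∣ (w : A) := by
    refine ⟨a * π ^ ((-j).toNat - 1), ?_⟩
    rw [hwa]
    have : (-j).toNat = ((-j).toNat - 1) + 1 := by omega
    conv_lhs => rw [this]
    rw [pow_succ]
    ring
  exact hπ.not_isUnit (isUnit_of_dvd_unit hdvd w.isUnit)

set_option maxHeartbeats 1000000 in
theorem sathaye_main
    (π : A) (hπ : Irreducible π)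
    (ψ : R →ₐ[A] Polynomial (FractionRing A))
    (hψ : Function.Injective ψ)
    (hloc : ∀ f : Polynomial (FractionRing A), ∃ (a : A) (r : R), a ≠ 0 ∧
        ψ r = Polynomial.C (algebraMap A (FractionRing A) a) * f)
    (hfg : Algebra.FiniteType A R)
    (hchar : CharZero (IsLocalRing.ResidueField A))
    (ρ : R →+* Polynomial (IsLocalRing.ResidueField A))
    (hρa : ∀ a : A, ρ (algebraMap A R a) = Polynomial.C (IsLocalRing.residue A a))
    (hρs : Function.Surjective ρ)
    (hρk : ∀ r : R, ρ r = 0 ↔ ∃ r', r = algebraMap A R π * r') :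
    ∃ x : R, Function.Bijective (Polynomial.aeval x : Polynomial A →ₐ[A] R) := by
  classical
  haveI := hchar
  haveI : CharZero A := RingHom.charZero (residue A)
  haveI : CharZero (FractionRing A) :=
    charZero_of_injective_algebraMap (IsFractionRing.injective A (FractionRing A))
  set φ := algebraMap A (FractionRing A) with hφdef
  have hφi : Function.Injective φ := IsFractionRing.injective A (FractionRing A)
  have hP : φ π ≠ 0 := fun h => hπ.ne_zero (hφi (by rw [h, map_zero]))
  have hψalg : ∀ a : A, ψ (algebraMap A R a) = C (φ a) := by
    intro a
    rw [ψ.commutes a, Polynomial.algebraMap_apply]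
  have hres : residue A π = 0 :=
    Ideal.Quotient.eq_zero_iff_mem.mpr ((mem_maximalIdeal _).mpr hπ.not_isUnit)
  have hρπ : ρ (algebraMap A R π) = 0 := by rw [hρa, hres, map_zero]
  have hπRnu : ¬ IsUnit (algebraMap A R π) := by
    intro h
    obtain ⟨v, hv⟩ := h.exists_right_inv
    have h1 : ρ (algebraMap A R π) * ρ v = 1 := by rw [← map_mul, hv, map_one]
    rw [hρπ, zero_mul] at h1
    exact zero_ne_one h1
  -- `R ∩ K = A`
  have hcap : ∀ c : FractionRing A, (∃ r, ψ r = C c) → ∃ a : A, φ a = c := by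
    rintro c ⟨r, hr⟩
    by_cases hc : c = 0
    · exact ⟨0, by rw [map_zero, hc]⟩
    obtain ⟨m, w, rfl⟩ := sathaye_zpow_rep π hπ c hc
    by_cases hm : 0 ≤ m
    · refine ⟨π ^ m.toNat * (w : A), ?_⟩
      rw [map_mul, map_pow, ← zpow_natCast (φ π), Int.toNat_of_nonneg hm]
    · push_neg at hm
      exfalso
      set j := (-m).toNat with hjdef
      have hj0 : j ≠ 0 := by omega
      have hjm : (j : ℤ) = -m := by omega
      have key : ψ (algebraMap A R (π ^ j) * r) = ψ (algebraMap A R (w : A)) := by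
        rw [map_mul, hψalg, hψalg, hr, ← C_mul]
        congr 1
        rw [map_pow, ← zpow_natCast (φ π) j, hjm, ← mul_assoc, ← zpow_add₀ hP]
        simp
        rfl
      have heq := hψ key
      have hu : IsUnit (algebraMap A R (w : A)) := w.isUnit.map (algebraMap A R)
      rw [← heq] at hu
      have h2 : IsUnit (algebraMap A R (π ^ j)) := isUnit_of_mul_isUnit_left hu
      rw [map_pow] at h2
      exact hπRnu ((isUnit_pow_iff hj0).mp h2)
  -- the divided-derivative property
  set Phi : FractionRing A → Prop :=
    fun c => ∀ r : R, ∃ r', ψ r' = C c * derivative (ψ r) with hPhidef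
  have hPhi_unit : ∀ (c : FractionRing A) (b : A), Phi c → Phi (φ b * c) := by
    intro c b hc r
    obtain ⟨r', hr'⟩ := hc r
    exact ⟨algebraMap A R b * r', by rw [map_mul, hψalg, hr', C_mul, mul_assoc]⟩
  have hPhi_exists : ∃ n₀ : ℕ, Phi ((φ π) ^ n₀) := by
    have hgen : ∀ t : Finset R, ∃ n₀ : ℕ, ∀ g ∈ t, ∃ r',
        ψ r' = C ((φ π) ^ n₀) * derivative (ψ g) := by
      intro t
      induction t using Finset.induction_on with
      | empty => exact ⟨0, by simp⟩
      | @insert g t hg ih =>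
        obtain ⟨n₁, h₁⟩ := ih
        obtain ⟨a, r, ha, hr⟩ := hloc (derivative (ψ g))
        obtain ⟨n₂, u, hu⟩ := IsDiscreteValuationRing.eq_unit_mul_pow_irreducible ha hπ
        refine ⟨n₁ + n₂, ?_⟩
        intro g' hg'
        rcases Finset.mem_insert.mp hg' with rfl | hg'
        · refine ⟨algebraMap A R (π ^ n₁ * ((u⁻¹ : Aˣ) : A)) * r, ?_⟩
          have harith : (π ^ n₁ * ((u⁻¹ : Aˣ) : A)) * a = π ^ (n₁ + n₂) := by
            rw [hu, pow_add]
            calc π ^ n₁ * ((u⁻¹ : Aˣ) : A) * ((u : A) * π ^ n₂)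
                = π ^ n₁ * π ^ n₂ * (((u⁻¹ : Aˣ) : A) * (u : A)) := by ring
              _ = π ^ n₁ * π ^ n₂ := by rw [Units.inv_mul, mul_one]
          rw [map_mul, hψalg, hr, ← mul_assoc, ← C_mul, ← map_mul, harith, map_pow]
          try rfl
        · obtain ⟨r', hr'⟩ := h₁ g' hg'
          refine ⟨algebraMap A R (π ^ n₂) * r', ?_⟩
          rw [map_mul, hψalg, hr', ← mul_assoc, ← C_mul, ← map_pow, ← map_mul, ← pow_add,
            add_comm n₂ n₁, map_pow]
    obtain ⟨s, hs⟩ := hfg.out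
    obtain ⟨n₀, hn₀⟩ := hgen s
    refine ⟨n₀, ?_⟩
    intro r
    let T : Subalgebra A R :=
      { carrier := {r : R | ∃ r', ψ r' = C ((φ π) ^ n₀) * derivative (ψ r)},
        zero_mem' := ⟨0, by simp⟩,
        one_mem' := ⟨0, by simp⟩,
        add_mem' := by
          rintro r₁ r₂ ⟨p₁, h₁⟩ ⟨p₂, h₂⟩
          exact ⟨p₁ + p₂, by rw [map_add, map_add, derivative_add, mul_add, h₁, h₂]⟩,
        mul_mem' := by
          rintro r₁ r₂ ⟨p₁, h₁⟩ ⟨p₂, h₂⟩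
          refine ⟨r₁ * p₂ + r₂ * p₁, ?_⟩
          rw [map_add, map_mul, map_mul, map_mul, derivative_mul, h₁, h₂]
          ring,
        algebraMap_mem' := fun a => ⟨0, by simp [hψalg]⟩ }
    have hT : r ∈ T := by
      have hle : Algebra.adjoin A (↑s : Set R) ≤ T :=
        Algebra.adjoin_le (fun g hg => hn₀ g hg)
      exact hle (hs.ge Algebra.mem_top)
    exact hT
  obtain ⟨n₀, hn₀⟩ := hPhi_exists
  -- the set of valuations of leading coefficients of degree-one elements
  set V : ℤ → Prop := fun m => ∃ (w : Aˣ) (r : R) (v : FractionRing A),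
    ψ r = C ((φ π) ^ m * φ (w : A)) * X + C v with hVdef
  have hVne : ∃ m, V m := by
    obtain ⟨a, r, ha, hr⟩ := hloc X
    obtain ⟨n, u, hu⟩ := IsDiscreteValuationRing.eq_unit_mul_pow_irreducible ha hπ
    refine ⟨(n : ℤ), u, r, 0, ?_⟩
    rw [C_0, add_zero, hr, hu, map_mul, map_pow, zpow_natCast, mul_comm (φ (u : A)) _]
  have hVbdd : ∀ m, V m → -(n₀ : ℤ) ≤ m := by
    rintro m ⟨w, r, v, hr⟩
    obtain ⟨r', hr'⟩ := hn₀ r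
    rw [hr] at hr'
    have hder : derivative (C ((φ π) ^ m * φ (w : A)) * X + C v)
        = C ((φ π) ^ m * φ (w : A)) := by
      rw [derivative_add, derivative_C, add_zero, derivative_C_mul_X]
    rw [hder, ← C_mul] at hr'
    obtain ⟨a, ha⟩ := hcap _ ⟨r', hr'⟩
    have hkey : (φ π) ^ ((n₀ : ℤ) + m) * φ (w : A) = φ a := by
      rw [zpow_add₀ hP, zpow_natCast, mul_assoc]
      exact ha.symm
    have := sathaye_zpow_nonneg π hπ hkey
    omega
  obtain ⟨m₀, hm₀V, hm₀min⟩ := Int.exists_least_of_bdd ⟨-(n₀ : ℤ), fun z hz => hVbdd z hz⟩ hVne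
  obtain ⟨w₀, x, v₀, hx⟩ := hm₀V
  set c₀ : FractionRing A := (φ π) ^ m₀ * φ (w₀ : A) with hc₀def
  have hw₀ : φ (w₀ : A) ≠ 0 := fun h => w₀.ne_zero (hφi (by rw [h, map_zero]))
  have hc₀ : c₀ ≠ 0 := mul_ne_zero (zpow_ne_zero _ hP) hw₀
  have hdx : derivative (ψ x) = C c₀ := by
    rw [hx, derivative_add, derivative_C, add_zero, derivative_C_mul_X]
  -- the minimal twisting exponent M
  set W : ℤ → Prop := fun n => Phi ((φ π) ^ n * c₀⁻¹) with hWdef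
  have hWne : ∃ n, W n := by
    refine ⟨(n₀ : ℤ) + m₀, ?_⟩
    have hrw : (φ π) ^ ((n₀ : ℤ) + m₀) * c₀⁻¹ = φ ((w₀⁻¹ : Aˣ) : A) * (φ π) ^ (n₀ : ℕ) := by
      have hinv : φ ((w₀⁻¹ : Aˣ) : A) * φ ((w₀ : A)) = 1 := by
        rw [← map_mul, Units.inv_mul, map_one]
      have hinv2 : φ ((w₀⁻¹ : Aˣ) : A) = (φ ((w₀ : A)))⁻¹ := eq_inv_of_mul_eq_one_left hinv
      have hz : (φ π) ^ m₀ * ((φ π) ^ m₀)⁻¹ = 1 := mul_inv_cancel₀ (zpow_ne_zero _ hP)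
      rw [hc₀def, mul_inv, zpow_add₀ hP, zpow_natCast, hinv2]
      calc (φ π) ^ (n₀ : ℕ) * (φ π) ^ m₀ * (((φ π) ^ m₀)⁻¹ * (φ ((w₀ : A)))⁻¹)
          = ((φ π) ^ m₀ * ((φ π) ^ m₀)⁻¹) * ((φ ((w₀ : A)))⁻¹ * (φ π) ^ (n₀ : ℕ)) := by ring
        _ = (φ ((w₀ : A)))⁻¹ * (φ π) ^ (n₀ : ℕ) := by rw [hz, one_mul]
    show Phi _
    rw [hrw]
    exact hPhi_unit _ _ hn₀
  have hWbdd : ∀ n, W n → 0 ≤ n := by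
    intro n hn
    obtain ⟨r', hr'⟩ := hn x
    rw [hdx, ← C_mul, mul_assoc, inv_mul_cancel₀ hc₀, mul_one] at hr'
    obtain ⟨a, ha⟩ := hcap _ ⟨r', hr'⟩
    have hkey : (φ π) ^ n * φ ((1 : Aˣ) : A) = φ a := by
      rw [Units.val_one, map_one, mul_one]
      exact ha.symm
    exact sathaye_zpow_nonneg π hπ hkey
  obtain ⟨M, hMW, hMmin⟩ := Int.exists_least_of_bdd ⟨0, fun z hz => hWbdd z hz⟩ hWne
  have hM0 : 0 ≤ M := hWbdd M hMW
  choose D hD using hMW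
  have hDadd : ∀ r s, D (r + s) = D r + D s := by
    intro r s
    apply hψ
    simp only [hD, map_add, derivative_add]
    ring
  have hDmul : ∀ r s, D (r * s) = r * D s + s * D r := by
    intro r s
    apply hψ
    simp only [hD, map_add, map_mul, derivative_mul]
    ring
  have hDalg : ∀ a : A, D (algebraMap A R a) = 0 := by
    intro a
    apply hψ
    rw [hD, hψalg, derivative_C, mul_zero, map_zero]
  rcases eq_or_lt_of_le hM0 with hM | hM1
  swap
  · -- `1 ≤ M`: contradiction with the minimality of `m₀`
    exfalso
    have hMne : ¬ W (M - 1) := fun h => by have := hMmin _ h; omega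
    have hstar : ∃ rs, ρ (D rs) ≠ 0 := by
      by_contra hall
      push_neg at hall
      apply hMne
      intro r
      obtain ⟨r', hr'⟩ := (hρk _).mp (hall r)
      refine ⟨r', ?_⟩
      have h1 : ψ (D r) = C (φ π) * ψ r' := by rw [hr', map_mul, hψalg]
      have h2 : C (φ π) * ψ r' = C ((φ π) ^ M * c₀⁻¹) * derivative (ψ r) := by
        rw [← h1]; exact hD r
      have hMar : (1 : ℤ) + (M - 1) = M := by omega
      have harith : φ π * ((φ π) ^ (M - 1) * c₀⁻¹) = (φ π) ^ M * c₀⁻¹ := by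
        rw [← mul_assoc, ← zpow_one_add₀ hP, hMar]
      have h3 : C (φ π) * (C ((φ π) ^ (M - 1) * c₀⁻¹) * derivative (ψ r))
          = C (φ π) * ψ r' := by
        rw [← mul_assoc, ← C_mul, harith, h2]
      exact (mul_left_cancel₀ (C_ne_zero.mpr hP) h3).symm
    obtain ⟨x₁, hx₁⟩ := hρs X
    -- the transported derivation is a multiple of d/dt
    let Θ : Subalgebra A R :=
      { carrier := {r : R | ρ (D r) = derivative (ρ r) * ρ (D x₁)},
        zero_mem' := by
          show ρ (D 0) = derivative (ρ 0) * ρ (D x₁)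
          have h0 : (0 : R) = algebraMap A R 0 := (map_zero _).symm
          rw [h0, hDalg, map_zero, hρa, derivative_C, zero_mul],
        one_mem' := by
          show ρ (D 1) = derivative (ρ 1) * ρ (D x₁)
          have h0 : (1 : R) = algebraMap A R 1 := (map_one _).symm
          rw [h0, hDalg, map_zero, hρa, derivative_C, zero_mul],
        add_mem' := by
          intro r s hr hs
          show ρ (D (r + s)) = derivative (ρ (r + s)) * ρ (D x₁)
          rw [hDadd, map_add, map_add, derivative_add, add_mul]
          rw [show ρ (D r) = derivative (ρ r) * ρ (D x₁) from hr,
            show ρ (D s) = derivative (ρ s) * ρ (D x₁) from hs],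
        mul_mem' := by
          intro r s hr hs
          show ρ (D (r * s)) = derivative (ρ (r * s)) * ρ (D x₁)
          rw [hDmul, map_add, map_mul, map_mul, map_mul, derivative_mul,
            show ρ (D r) = derivative (ρ r) * ρ (D x₁) from hr,
            show ρ (D s) = derivative (ρ s) * ρ (D x₁) from hs]
          ring,
        algebraMap_mem' := by
          intro a
          show ρ (D (algebraMap A R a)) = derivative (ρ (algebraMap A R a)) * ρ (D x₁)
          rw [hDalg, map_zero, hρa, derivative_C, zero_mul] }
    have hx₁Θ : x₁ ∈ Θ := by
      show ρ (D x₁) = derivative (ρ x₁) * ρ (D x₁)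
      rw [hx₁, derivative_X, one_mul]
    have haevalΘ : ∀ g : Polynomial A, (Polynomial.aeval x₁ : Polynomial A →ₐ[A] R) g ∈ Θ := by
      intro g
      have hmem : (Polynomial.aeval x₁ : Polynomial A →ₐ[A] R) g ∈ Algebra.adjoin A {x₁} := by
        rw [Algebra.adjoin_singleton_eq_range_aeval]
        exact ⟨g, rfl⟩
      exact Algebra.adjoin_le (Set.singleton_subset_iff.mpr hx₁Θ) hmem
    have hmap : ∀ g : Polynomial A,
        ρ ((Polynomial.aeval x₁ : Polynomial A →ₐ[A] R) g) = g.map (residue A) := by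
      intro g
      induction g using Polynomial.induction_on' with
      | add p q hp hq => rw [map_add, map_add, Polynomial.map_add, hp, hq]
      | monomial n a =>
        rw [aeval_monomial, map_mul, map_pow, hx₁, hρa, Polynomial.map_monomial,
          ← C_mul_X_pow_eq_monomial]
    have hTheta : ∀ r : R, ρ (D r) = derivative (ρ r) * ρ (D x₁) := by
      intro r
      obtain ⟨q0, hq0⟩ := Polynomial.map_surjective _ (IsLocalRing.residue_surjective) (ρ r)
      have hker : ρ (r - (Polynomial.aeval x₁ : Polynomial A →ₐ[A] R) q0) = 0 := by
        rw [map_sub, hmap, hq0, sub_self]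
      obtain ⟨t', ht'⟩ := (hρk _).mp hker
      have hrdec : r = (Polynomial.aeval x₁ : Polynomial A →ₐ[A] R) q0
          + algebraMap A R π * t' := by rw [← ht']; ring
      have hDt : ρ (D (algebraMap A R π * t')) = 0 := by
        rw [hDmul, map_add, map_mul, map_mul, hDalg, map_zero, mul_zero, add_zero, hρπ,
          zero_mul]
      have hρt : ρ (algebraMap A R π * t') = 0 := by rw [map_mul, hρπ, zero_mul]
      rw [hrdec, hDadd, map_add, map_add, hρt, add_zero, hDt, add_zero]
      exact haevalΘ q0
    have hDx : D x = algebraMap A R (π ^ M.toNat) := by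
      apply hψ
      rw [hD, hdx, hψalg, ← C_mul, mul_assoc, inv_mul_cancel₀ hc₀, mul_one, map_pow,
        ← zpow_natCast (φ π), Int.toNat_of_nonneg hM0]
    have hρDx : ρ (D x) = 0 := by
      rw [hDx, hρa, map_pow, hres, zero_pow (by omega : M.toNat ≠ 0), map_zero]
    have hDx₁ne : ρ (D x₁) ≠ 0 := by
      obtain ⟨rs, hrs⟩ := hstar
      intro h0
      exact hrs (by rw [hTheta rs, h0, mul_zero])
    have hderx : derivative (ρ x) = 0 := by
      have hth := hTheta x
      rw [hρDx] at hth
      rcases mul_eq_zero.mp hth.symm with h | h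
      · exact h
      · exact absurd h hDx₁ne
    have hCx : ρ x = C ((ρ x).coeff 0) := Polynomial.eq_C_of_derivative_eq_zero hderx
    obtain ⟨a₀, ha₀⟩ := IsLocalRing.residue_surjective ((ρ x).coeff 0)
    have hker : ρ (x - algebraMap A R a₀) = 0 := by
      rw [map_sub, hρa, ha₀, ← hCx, sub_self]
    obtain ⟨r₁, hr₁⟩ := (hρk _).mp hker
    have hψr₁ : C (φ π) * ψ r₁ = C c₀ * X + C (v₀ - φ a₀) := by
      rw [← hψalg, ← map_mul, ← hr₁, map_sub, hx, hψalg, map_sub]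
      ring
    have hV' : V (m₀ - 1) := by
      refine ⟨w₀, r₁, (v₀ - φ a₀) * (φ π)⁻¹, ?_⟩
      apply mul_left_cancel₀ (C_ne_zero.mpr hP)
      rw [hψr₁, mul_add, ← mul_assoc, ← C_mul, ← C_mul]
      have hMar : (1 : ℤ) + (m₀ - 1) = m₀ := by omega
      have ha1 : φ π * ((φ π) ^ (m₀ - 1) * φ ((w₀ : A))) = c₀ := by
        rw [← mul_assoc, ← zpow_one_add₀ hP, hMar, hc₀def]
      have ha2 : φ π * ((v₀ - φ a₀) * (φ π)⁻¹) = v₀ - φ a₀ := by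
        field_simp
      rw [ha1, ha2]
    have := hm₀min _ hV'
    omega
  · -- `M = 0`: `R = A[x]`
    have hD0 : ∀ r, ψ (D r) = C c₀⁻¹ * derivative (ψ r) := by
      intro r
      have h := hD r
      rwa [← hM, zpow_zero, one_mul] at h
    have hnat : ∀ n : ℕ, n ≠ 0 → IsUnit (n : A) := by
      intro n hn
      by_contra h
      have h0 : residue A (n : A) = 0 :=
        Ideal.Quotient.eq_zero_iff_mem.mpr ((mem_maximalIdeal _).mpr h)
      rw [map_natCast] at h0
      exact (Nat.cast_ne_zero.mpr hn : ((n : ResidueField A) ≠ 0)) h0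
    have hanti : ∀ g : Polynomial A, ∃ G : Polynomial A, derivative G = g := by
      intro g
      induction g using Polynomial.induction_on' with
      | add p q hp hq =>
        obtain ⟨P, hPd⟩ := hp
        obtain ⟨Q, hQ⟩ := hq
        exact ⟨P + Q, by rw [derivative_add, hPd, hQ]⟩
      | monomial n a =>
        obtain ⟨u, hu⟩ := hnat (n + 1) (Nat.succ_ne_zero n)
        refine ⟨monomial (n + 1) (((u⁻¹ : Aˣ) : A) * a), ?_⟩
        rw [derivative_monomial, Nat.add_sub_cancel]
        congr 1
        calc ((u⁻¹ : Aˣ) : A) * a * ((n + 1 : ℕ) : A)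
            = ((u⁻¹ : Aˣ) : A) * (u : A) * a := by rw [hu]; ring
          _ = a := by rw [Units.inv_mul, one_mul]
    have haevalcomp : ∀ (p : Polynomial (FractionRing A)) (g : Polynomial A),
        (Polynomial.aeval p) g = (g.map φ).comp p := by
      intro p g
      rw [aeval_def, IsScalarTower.algebraMap_eq A (FractionRing A) (Polynomial (FractionRing A)),
        Polynomial.algebraMap_eq]
      exact (Polynomial.eval₂_map φ C p).symm
    have hinj : Function.Injective (Polynomial.aeval x : Polynomial A →ₐ[A] R) := by
      have h0 : ∀ g : Polynomial A, (Polynomial.aeval x : Polynomial A →ₐ[A] R) g = 0 →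
          g = 0 := by
        intro g hg
        by_contra hgne
        have h1 : (g.map φ).comp (ψ x) = 0 := by
          rw [← haevalcomp, Polynomial.aeval_algHom_apply ψ x g, hg, map_zero]
        have hgm : g.map φ ≠ 0 := fun h =>
          hgne (Polynomial.map_injective φ hφi (by rw [h, Polynomial.map_zero]))
        have hdeg1 : (ψ x).natDegree = 1 := by rw [hx]; exact natDegree_linear hc₀
        have hcompdeg : ((g.map φ).comp (ψ x)).natDegree = (g.map φ).natDegree := by
          rw [natDegree_comp, hdeg1, mul_one]
        rw [h1, natDegree_zero] at hcompdeg
        obtain ⟨c, hc⟩ := Polynomial.natDegree_eq_zero.mp hcompdeg.symm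
        rw [← hc, C_comp] at h1
        exact hgm (by rw [← hc, C_eq_zero.mp h1, C_0])
      intro g₁ g₂ h12
      have h3 := h0 (g₁ - g₂) (by rw [map_sub, h12, sub_self])
      exact sub_eq_zero.mp h3
    have hsurj : Function.Surjective (Polynomial.aeval x : Polynomial A →ₐ[A] R) := by
      have hstep : ∀ (n : ℕ) (r : R), (ψ r).natDegree ≤ n →
          ∃ g : Polynomial A, (Polynomial.aeval x : Polynomial A →ₐ[A] R) g = r := by
        intro n
        induction n with
        | zero =>
          intro r hr
          have hC : ψ r = C ((ψ r).coeff 0) := Polynomial.eq_C_of_natDegree_le_zero hr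
          obtain ⟨a, ha⟩ := hcap _ ⟨r, hC⟩
          refine ⟨Polynomial.C a, ?_⟩
          apply hψ
          rw [Polynomial.aeval_C, hψalg, ha, ← hC]
        | succ n ih =>
          intro r hr
          have hdD : (ψ (D r)).natDegree ≤ n := by
            rw [hD0]
            refine le_trans (natDegree_C_mul_le _ _) (le_trans (natDegree_derivative_le _) ?_)
            omega
          obtain ⟨g', hg'⟩ := ih (D r) hdD
          obtain ⟨g₁, hg₁⟩ := hanti g'
          have hchain : derivative (ψ ((Polynomial.aeval x : Polynomial A →ₐ[A] R) g₁))
              = C c₀ * ψ (D r) := by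
            rw [← Polynomial.aeval_algHom_apply ψ x g₁, haevalcomp, derivative_comp, hdx,
              Polynomial.derivative_map, hg₁, ← haevalcomp,
              Polynomial.aeval_algHom_apply ψ x g', hg']
          have hd2 : derivative (ψ (r - (Polynomial.aeval x : Polynomial A →ₐ[A] R) g₁))
              = 0 := by
            rw [map_sub, derivative_sub, hchain, hD0, ← mul_assoc, ← C_mul,
              mul_inv_cancel₀ hc₀, C_1, one_mul, sub_self]
          have hC2 : ψ (r - (Polynomial.aeval x : Polynomial A →ₐ[A] R) g₁)
              = C ((ψ (r - (Polynomial.aeval x : Polynomial A →ₐ[A] R) g₁)).coeff 0) :=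
            Polynomial.eq_C_of_derivative_eq_zero hd2
          obtain ⟨a, ha⟩ := hcap _ ⟨_, hC2⟩
          refine ⟨g₁ + Polynomial.C a, ?_⟩
          rw [map_add, Polynomial.aeval_C]
          have heq : algebraMap A R a = r - (Polynomial.aeval x : Polynomial A →ₐ[A] R) g₁ := by
            apply hψ
            rw [hψalg, ha, ← hC2]
          rw [heq]
          ring
      intro r
      exact hstep (ψ r).natDegree r le_rfl
    exact ⟨x, hinj, hsurj⟩

end Sathaye

/-- **Sathaye's theorem / the DVR case of triviality of `𝔸ⁿ`-fibrations** (Proposition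
`discval.prop`, case `n = 1`). Let `A` be a discrete valuation ring with quotient field
`K`, maximal ideal `m` and residue field `k = A/m` of characteristic zero. Let `R ⊇ A`
be a domain, finitely generated and flat over `A`, such that the generic fiber
`K ⊗[A] R` is `K`-isomorphic to `K[t]` and the special fiber `R/mR` is `k`-isomorphic
to `k[t]` (the `k`-algebra condition is expressed by requiring the ring isomorphism to
be compatible with the structure maps from `A`).  Then `R ≅ A[t]`. -/
theorem dvr_polynomial_fibration
    (A R : Type*) [CommRing A] [IsDomain A] [IsDiscreteValuationRing A]
    [CommRing R] [IsDomain R] [Algebra A R]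
    (hinj : Function.Injective (algebraMap A R))
    (hfg : Algebra.FiniteType A R) (hflat : Module.Flat A R)
    (hchar : CharZero (IsLocalRing.ResidueField A))
    (hgen : Nonempty ((TensorProduct A (FractionRing A) R) ≃ₐ[FractionRing A]
      Polynomial (FractionRing A)))
    (hspec : ∃ e : (R ⧸ Ideal.map (algebraMap A R) (IsLocalRing.maximalIdeal A)) ≃+*
        Polynomial (IsLocalRing.ResidueField A),
      ∀ a : A, e (Ideal.Quotient.mk _ (algebraMap A R a)) =
        Polynomial.C (IsLocalRing.residue A a)) :
    Nonempty (R ≃ₐ[A] Polynomial A) := by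
  classical
  set K := FractionRing A
  obtain ⟨π, hπ⟩ := IsDiscreteValuationRing.exists_irreducible A
  obtain ⟨e, he⟩ := hspec
  -- the embedding ψ : R → K[X]
  let ι : (TensorProduct A K R) ≃ₐ[K] Polynomial K := hgen.some
  let ι' := ι.restrictScalars A
  let ψ : R →ₐ[A] Polynomial K :=
    (ι'.toAlgHom).comp (Algebra.TensorProduct.includeRight : R →ₐ[A] TensorProduct A K R)
  have hincl : Function.Injective
      (Algebra.TensorProduct.includeRight : R →ₐ[A] TensorProduct A K R) := by
    have hf : Function.Injective (Algebra.linearMap A K) := IsFractionRing.injective A K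
    have hL : Function.Injective ((Algebra.linearMap A K).rTensor R) :=
      Module.Flat.rTensor_preserves_injective_linearMap _ hf
    have : ∀ r : R, (Algebra.TensorProduct.includeRight : R →ₐ[A] TensorProduct A K R) r
        = ((Algebra.linearMap A K).rTensor R) ((TensorProduct.lid A R).symm r) := by
      intro r
      simp only [Algebra.TensorProduct.includeRight, TensorProduct.lid_symm_apply,
        LinearMap.rTensor_tmul, AlgHom.coe_mk, RingHom.coe_mk, MonoidHom.coe_mk, OneHom.coe_mk,
        Algebra.linearMap_apply, map_one]
      rfl
    intro r₁ r₂ h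
    rw [this, this] at h
    exact (TensorProduct.lid A R).symm.injective (hL h)
  have hψ : Function.Injective ψ := by
    intro r₁ r₂ h
    exact hincl (ι'.injective h)
  have hloc : ∀ f : Polynomial K, ∃ (a : A) (r : R), a ≠ 0 ∧
      ψ r = Polynomial.C (algebraMap A K a) * f := by
    intro f
    have key : ∀ z : TensorProduct A K R, ∃ (a : A) (r : R), a ≠ 0 ∧
        a • z = (1 : K) ⊗ₜ[A] r := by
      intro z
      induction z using TensorProduct.induction_on with
      | zero => exact ⟨1, 0, one_ne_zero, by simp⟩
      | tmul c r =>
        obtain ⟨⟨a₁, s⟩, hs⟩ := IsLocalization.surj (nonZeroDivisors A) c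
        refine ⟨(s : A), a₁ • r, nonZeroDivisors.coe_ne_zero s, ?_⟩
        rw [TensorProduct.smul_tmul', ← TensorProduct.smul_tmul]
        congr 1
        rw [Algebra.smul_def, Algebra.smul_def]
        simp only [mul_one]
        rw [mul_comm]
        exact hs
      | add z₁ z₂ ih₁ ih₂ =>
        obtain ⟨a₁, r₁, ha₁, h₁⟩ := ih₁
        obtain ⟨a₂, r₂, ha₂, h₂⟩ := ih₂
        refine ⟨a₁ * a₂, a₂ • r₁ + a₁ • r₂, mul_ne_zero ha₁ ha₂, ?_⟩
        rw [smul_add, TensorProduct.tmul_add]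
        have e₁ : (a₁ * a₂) • z₁ = (1 : K) ⊗ₜ[A] (a₂ • r₁) := by
          rw [mul_comm, mul_smul, h₁, TensorProduct.tmul_smul]
        have e₂ : (a₁ * a₂) • z₂ = (1 : K) ⊗ₜ[A] (a₁ • r₂) := by
          rw [mul_smul, h₂, TensorProduct.tmul_smul]
        rw [e₁, e₂]
    obtain ⟨a, r, ha, h⟩ := key (ι'.symm f)
    refine ⟨a, r, ha, ?_⟩
    have : ψ r = ι' ((1 : K) ⊗ₜ[A] r) := rfl
    rw [this, ← h, map_smul, AlgEquiv.apply_symm_apply, Algebra.smul_def]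
    congr 1
  -- the special fiber map ρ
  let mk := Ideal.Quotient.mk (Ideal.map (algebraMap A R) (IsLocalRing.maximalIdeal A))
  let ρ : R →+* Polynomial (IsLocalRing.ResidueField A) := e.toRingHom.comp mk
  have hρa : ∀ a : A, ρ (algebraMap A R a) = Polynomial.C (IsLocalRing.residue A a) := he
  have hρs : Function.Surjective ρ := e.surjective.comp Ideal.Quotient.mk_surjective
  have hρk : ∀ r : R, ρ r = 0 ↔ ∃ r', r = algebraMap A R π * r' := by
    intro r
    have h1 : ρ r = 0 ↔ mk r = 0 := by
      constructor
      · intro h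
        apply e.injective
        rw [map_zero]
        exact h
      · intro h
        show e.toRingHom (mk r) = 0
        rw [h, map_zero]
    rw [h1, Ideal.Quotient.eq_zero_iff_mem]
    have h2 : Ideal.map (algebraMap A R) (IsLocalRing.maximalIdeal A)
        = Ideal.span {algebraMap A R π} := by
      rw [(IsDiscreteValuationRing.irreducible_iff_uniformizer π).mp hπ, Ideal.map_span,
        Set.image_singleton]
    rw [h2, Ideal.mem_span_singleton]
    exact ⟨fun ⟨c, hc⟩ => ⟨c, hc⟩, fun ⟨c, hc⟩ => ⟨c, hc⟩⟩
  obtain ⟨x, hx⟩ := sathaye_main π hπ ψ hψ hloc hfg hchar ρ hρa hρs hρk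
  exact ⟨(AlgEquiv.ofBijective (Polynomial.aeval x : Polynomial A →ₐ[A] R) hx).symm⟩
end

section
/- Let ℂ* act linearly on A^3 = ℂ³ by t·(x,y,z) = (t^{n₁}x, t^{n₂}y, t^{n₃}z) with weights n₁ ≥ n₂ > 0 > n₃. Then the set U = {v ∈ A^3 : lim_{t→0} t·v = 0} equals the hyperplane {z = 0}, and any automorphism g of A^3 normalizing this ℂ*-action (i.e., g t g^{-1} ∈ {t, t^{-1}} for all t) that inverts the torus would map U to the line {x = y = 0}; hence every such g commutes with ℂ* and stabilizes U. -/
open Filter Topology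

/-- The diagonal `ℂ*`-action on `𝔸³ = ℂ³` with integer weights `n`. -/
noncomputable def torusAction (n : Fin 3 → ℤ) (t : ℂ) (v : Fin 3 → ℂ) : Fin 3 → ℂ :=
  fun i => t ^ (n i) * v i

/-- The point map `ℂ³ → ℂ³` induced by a `ℂ`-algebra automorphism `σ` of `ℂ[x₀,x₁,x₂]`
(a polynomial automorphism of `𝔸³`). -/
noncomputable def pointMap (σ : MvPolynomial (Fin 3) ℂ ≃ₐ[ℂ] MvPolynomial (Fin 3) ℂ)
    (v : Fin 3 → ℂ) : Fin 3 → ℂ :=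
  fun i => MvPolynomial.eval v (σ (MvPolynomial.X i))

lemma tendsto_zpow_pos {m : ℤ} (hm : 0 < m) :
    Tendsto (fun t : ℂ => t ^ m) (𝓝[≠] 0) (𝓝 0) := by
  have hk : m = (m.toNat : ℤ) := (Int.toNat_of_nonneg hm.le).symm
  have : (fun t : ℂ => t ^ m) = fun t : ℂ => t ^ m.toNat := by
    funext t; conv_lhs => rw [hk, zpow_natCast]
  rw [this]
  have h0 : (0:ℂ) ^ m.toNat = 0 := zero_pow (by omega)
  have h := ((continuous_pow m.toNat).tendsto (0:ℂ)).mono_left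
    (nhdsWithin_le_nhds (s := {(0:ℂ)}ᶜ))
  rwa [h0] at h

lemma eq_zero_of_tendsto_zpow_neg {m : ℤ} (hm : m < 0) {c L : ℂ}
    (h : Tendsto (fun t : ℂ => t ^ m * c) (𝓝[≠] 0) (𝓝 L)) : c = 0 := by
  have h1 : Tendsto (fun t : ℂ => t ^ (-m)) (𝓝[≠] 0) (𝓝 0) := tendsto_zpow_pos (by omega)
  have h2 : Tendsto (fun t : ℂ => t ^ (-m) * (t ^ m * c)) (𝓝[≠] 0) (𝓝 (0 * L)) := h1.mul h
  rw [zero_mul] at h2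
  have h3 : Tendsto (fun _ : ℂ => c) (𝓝[≠] (0:ℂ)) (𝓝 0) := by
    refine h2.congr' ?_
    filter_upwards [self_mem_nhdsWithin] with t ht
    have ht : t ≠ 0 := ht
    rw [← mul_assoc, ← zpow_add₀ ht, neg_add_cancel, zpow_zero, one_mul]
  exact tendsto_nhds_unique tendsto_const_nhds h3

lemma aeval_eq_eval' (w : Fin 3 → ℂ) (p : MvPolynomial (Fin 3) ℂ) :
    MvPolynomial.aeval w p = MvPolynomial.eval w p := rfl

open MvPolynomial in
lemma eval_pointMap (σ : MvPolynomial (Fin 3) ℂ ≃ₐ[ℂ] MvPolynomial (Fin 3) ℂ)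
    (v : Fin 3 → ℂ) (p : MvPolynomial (Fin 3) ℂ) :
    eval (pointMap σ v) p = eval v (σ p) := by
  have h : (aeval (pointMap σ v) : MvPolynomial (Fin 3) ℂ →ₐ[ℂ] ℂ) =
      (aeval v).comp σ.toAlgHom := by
    apply algHom_ext
    intro i
    simp [aeval_eq_eval', pointMap]
  have := AlgHom.congr_fun h p
  simpa [aeval_eq_eval'] using this

lemma pointMap_symm_comp (σ : MvPolynomial (Fin 3) ℂ ≃ₐ[ℂ] MvPolynomial (Fin 3) ℂ)
    (v : Fin 3 → ℂ) : pointMap σ.symm (pointMap σ v) = v := by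
  funext i
  have := eval_pointMap σ v (σ.symm (MvPolynomial.X i))
  simpa [pointMap] using (by simpa using this)

lemma pointMap_injective (σ : MvPolynomial (Fin 3) ℂ ≃ₐ[ℂ] MvPolynomial (Fin 3) ℂ) :
    Function.Injective (pointMap σ) :=
  Function.LeftInverse.injective (g := pointMap σ.symm) (pointMap_symm_comp σ)

lemma continuous_mv_eval (p : MvPolynomial (Fin 3) ℂ) :
    Continuous fun v : Fin 3 → ℂ => MvPolynomial.eval v p := by
  induction p using MvPolynomial.induction_on with
  | C c => simpa using continuous_const
  | add p q hp hq => simpa using (show Continuous fun v : Fin 3 → ℂ => MvPolynomial.eval v p + MvPolynomial.eval v q from hp.add hq)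
  | mul_X p i hp => simpa using (show Continuous fun v : Fin 3 → ℂ => MvPolynomial.eval v p * v i from hp.mul (continuous_apply i))

lemma continuous_pointMap (σ : MvPolynomial (Fin 3) ℂ ≃ₐ[ℂ] MvPolynomial (Fin 3) ℂ) :
    Continuous (pointMap σ) :=
  continuous_pi fun i => continuous_mv_eval _

lemma tendsto_torusAction_of_pos (n : Fin 3 → ℤ) (h0 : 0 < n 0) (h1 : 0 < n 1)
    (v : Fin 3 → ℂ) (hv : v 2 = 0) :
    Tendsto (fun t : ℂ => torusAction n t v) (𝓝[≠] 0) (𝓝 0) := by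
  rw [tendsto_pi_nhds]
  intro i
  fin_cases i
  · simpa [torusAction] using (tendsto_zpow_pos h0).mul_const (v 0) |>.congr' (by simp) |>.mono_right (by rw [zero_mul])
  · simpa [torusAction] using (tendsto_zpow_pos h1).mul_const (v 1) |>.congr' (by simp) |>.mono_right (by rw [zero_mul])
  · simpa [torusAction, hv] using tendsto_const_nhds

lemma attracting_zero (n : Fin 3 → ℤ) (h0 : 0 < n 0) (h1 : 0 < n 1) (h2 : n 2 < 0) :
    {v : Fin 3 → ℂ | Tendsto (fun t : ℂ => torusAction n t v) (𝓝[≠] 0) (𝓝 0)} =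
      {v : Fin 3 → ℂ | v 2 = 0} := by
  ext v
  constructor
  · intro hv
    have h := (tendsto_pi_nhds.1 hv) 2
    exact eq_zero_of_tendsto_zpow_neg h2 (by simpa [torusAction] using h)
  · exact tendsto_torusAction_of_pos n h0 h1 v

lemma eventually_ne_zero_cobounded : ∀ᶠ t : ℂ in Bornology.cobounded ℂ, t ≠ 0 := by
  have : {(0:ℂ)}ᶜ ∈ Bornology.cobounded ℂ := by
    exact Bornology.isBounded_singleton.compl
  exact this

lemma attracting_infty (n : Fin 3 → ℤ) (h0 : 0 < n 0) (h1 : 0 < n 1) (h2 : n 2 < 0) :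
    {v : Fin 3 → ℂ |
        Tendsto (fun t : ℂ => torusAction n t v) (Bornology.cobounded ℂ) (𝓝 0)} =
      {v : Fin 3 → ℂ | v 0 = 0 ∧ v 1 = 0} := by
  ext v
  constructor
  · intro hv
    have hcomp : Tendsto (fun s : ℂ => torusAction n s⁻¹ v) (𝓝[≠] 0) (𝓝 0) :=
      hv.comp Filter.tendsto_inv₀_nhdsNE_zero
    have key : ∀ i : Fin 3, 0 < n i →
        Tendsto (fun s : ℂ => s ^ (-(n i)) * v i) (𝓝[≠] 0) (𝓝 0) := by
      intro i _
      have h := (tendsto_pi_nhds.1 hcomp) i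
      refine (h.congr' ?_).mono_right (by simp)
      filter_upwards [self_mem_nhdsWithin] with s hs
      have hs : s ≠ 0 := hs
      simp [torusAction, ← zpow_neg, inv_zpow]
    exact ⟨eq_zero_of_tendsto_zpow_neg (by omega) (key 0 h0),
      eq_zero_of_tendsto_zpow_neg (by omega) (key 1 h1)⟩
  · rintro ⟨hv0, hv1⟩
    show Tendsto _ _ _
    rw [tendsto_pi_nhds]
    intro i
    have hinv : Tendsto (fun t : ℂ => t⁻¹) (Bornology.cobounded ℂ) (𝓝[≠] 0) :=
      Filter.tendsto_inv₀_cobounded'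
    fin_cases i
    · simpa [torusAction, hv0] using tendsto_const_nhds
    · simpa [torusAction, hv1] using tendsto_const_nhds
    · have h := ((tendsto_zpow_pos (m := -(n 2)) (by omega)).mul_const (v 2)).comp hinv
      rw [zero_mul] at h
      refine (h.congr' ?_).mono_right (by simp)
      filter_upwards [eventually_ne_zero_cobounded] with t ht
      simp [torusAction, Function.comp, inv_zpow, ← zpow_neg]

lemma poly_surjective (F : ℂ → ℂ) (q : Polynomial ℂ) (hq : ∀ b, F b = q.eval b)
    (hni : F 0 ≠ F 1) : Function.Surjective F := by
  have hdeg : 0 < q.degree := by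
    by_contra hle
    push_neg at hle
    rw [Polynomial.eq_C_of_degree_le_zero hle] at hq
    exact hni (by simp [hq 0, hq 1])
  intro c
  obtain ⟨z, hz⟩ := Complex.exists_root (f := q - Polynomial.C c)
    (by rwa [Polynomial.degree_sub_C hdeg])
  refine ⟨z, ?_⟩
  have : q.eval z - c = 0 := by simpa [Polynomial.IsRoot] using hz
  rw [hq z]
  exact sub_eq_zero.1 this

lemma no_injective_poly (F : ℂ → ℂ → ℂ)
    (hpoly : ∀ a, ∃ q : Polynomial ℂ, ∀ b, F a b = q.eval b)
    (hinj : ∀ a b c d, F a b = F c d → a = c ∧ b = d) : False := by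
  have hsurj : ∀ a, Function.Surjective (F a) := by
    intro a
    obtain ⟨q, hq⟩ := hpoly a
    refine poly_surjective (F a) q hq ?_
    intro h
    exact absurd (hinj a 0 a 1 h).2 (by norm_num)
  obtain ⟨b, hb⟩ := hsurj 0 (F 1 0)
  exact absurd (hinj 0 b 1 0 hb).1 (by norm_num)

open MvPolynomial in
lemma pointMap_slice (σ : MvPolynomial (Fin 3) ℂ ≃ₐ[ℂ] MvPolynomial (Fin 3) ℂ) (a : ℂ) :
    ∃ q : Polynomial ℂ, ∀ b : ℂ, pointMap σ ![a, b, 0] 2 = q.eval b := by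
  refine ⟨aeval ![Polynomial.C a, Polynomial.X, 0] (σ (X 2)), fun b => ?_⟩
  have h : (MvPolynomial.aeval (![a, b, 0] : Fin 3 → ℂ) :
      MvPolynomial (Fin 3) ℂ →ₐ[ℂ] ℂ) =
      (Polynomial.aeval b).comp (aeval ![Polynomial.C a, Polynomial.X, 0]) := by
    apply algHom_ext
    intro i
    fin_cases i <;> simp
  have hb : ∀ p : Polynomial ℂ, Polynomial.aeval b p = p.eval b := fun _ => rfl
  have := AlgHom.congr_fun h (σ (X 2))
  simp only [AlgHom.comp_apply, hb] at this
  rw [pointMap, ← aeval_eq_eval', this]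

lemma pointMap_comp_symm (σ : MvPolynomial (Fin 3) ℂ ≃ₐ[ℂ] MvPolynomial (Fin 3) ℂ)
    (v : Fin 3 → ℂ) : pointMap σ (pointMap σ.symm v) = v := by
  have := pointMap_symm_comp σ.symm v
  rwa [AlgEquiv.symm_symm] at this

/-- In the inverting case, the image of a point of `{z = 0}` lies on `{x = y = 0}`. -/
lemma inverting_maps_to_line (n : Fin 3 → ℤ) (h0 : 0 < n 0) (h1 : 0 < n 1)
    (σ : MvPolynomial (Fin 3) ℂ ≃ₐ[ℂ] MvPolynomial (Fin 3) ℂ)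
    (h : ∀ t : ℂ, t ≠ 0 → pointMap σ ∘ torusAction n t = torusAction n t⁻¹ ∘ pointMap σ)
    (v : Fin 3 → ℂ) (hv : v 2 = 0) :
    pointMap σ v 0 = 0 ∧ pointMap σ v 1 = 0 := by
  have hv0 := tendsto_torusAction_of_pos n h0 h1 v hv
  have hc : Tendsto (fun t : ℂ => pointMap σ (torusAction n t v)) (𝓝[≠] 0)
      (𝓝 (pointMap σ 0)) := ((continuous_pointMap σ).tendsto 0).comp hv0
  have hc' : Tendsto (fun t : ℂ => torusAction n t⁻¹ (pointMap σ v)) (𝓝[≠] 0)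
      (𝓝 (pointMap σ 0)) := by
    refine hc.congr' ?_
    filter_upwards [self_mem_nhdsWithin] with t ht
    exact congrFun (h t ht) v
  have key : ∀ i : Fin 3, 0 < n i → pointMap σ v i = 0 := by
    intro i hi
    have hcomp := (tendsto_pi_nhds.1 hc') i
    refine eq_zero_of_tendsto_zpow_neg (m := -(n i)) (by omega) (hcomp.congr' ?_)
    filter_upwards [self_mem_nhdsWithin] with t ht
    have ht : t ≠ 0 := ht
    simp [torusAction, inv_zpow, ← zpow_neg]
  exact ⟨key 0 h0, key 1 h1⟩

/-- In the commuting case, `pointMap` preserves `{z = 0}`. -/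
lemma commuting_maps_to_plane (n : Fin 3 → ℤ) (h0 : 0 < n 0) (h1 : 0 < n 1) (h2 : n 2 < 0)
    (σ : MvPolynomial (Fin 3) ℂ ≃ₐ[ℂ] MvPolynomial (Fin 3) ℂ)
    (h : ∀ t : ℂ, t ≠ 0 → pointMap σ ∘ torusAction n t = torusAction n t ∘ pointMap σ)
    (v : Fin 3 → ℂ) (hv : v 2 = 0) : pointMap σ v 2 = 0 := by
  have hv0 := tendsto_torusAction_of_pos n h0 h1 v hv
  have hc : Tendsto (fun t : ℂ => pointMap σ (torusAction n t v)) (𝓝[≠] 0)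
      (𝓝 (pointMap σ 0)) := ((continuous_pointMap σ).tendsto 0).comp hv0
  have hc' : Tendsto (fun t : ℂ => torusAction n t (pointMap σ v)) (𝓝[≠] 0)
      (𝓝 (pointMap σ 0)) := by
    refine hc.congr' ?_
    filter_upwards [self_mem_nhdsWithin] with t ht
    exact congrFun (h t ht) v
  exact eq_zero_of_tendsto_zpow_neg h2 ((tendsto_pi_nhds.1 hc') 2)

/-- Step (d) in the proof of Theorem `A3linearization.thm`.  Let `ℂ*` act linearly on
`𝔸³` with weights `n₀ ≥ n₁ > 0 > n₂`.  Then the attracting set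
`U = {v : lim_{t→0} t·v = 0}` is the hyperplane `{z = 0}`, the attracting set for
`t → ∞` is the line `{x = y = 0}`, and every polynomial automorphism `g` of `𝔸³`
normalizing the `ℂ*`-action (conjugation by `g` fixes or inverts the torus) in fact
commutes with the `ℂ*`-action and stabilizes `U`. -/
theorem normalizer_of_torus_action_stabilizes_attracting_set
    (n : Fin 3 → ℤ) (h01 : n 0 ≥ n 1) (h1 : n 1 > 0) (h2 : n 2 < 0)
    (σ : MvPolynomial (Fin 3) ℂ ≃ₐ[ℂ] MvPolynomial (Fin 3) ℂ)
    (hnorm : (∀ t : ℂ, t ≠ 0 → pointMap σ ∘ torusAction n t = torusAction n t ∘ pointMap σ) ∨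
      (∀ t : ℂ, t ≠ 0 → pointMap σ ∘ torusAction n t = torusAction n t⁻¹ ∘ pointMap σ)) :
    {v : Fin 3 → ℂ | Tendsto (fun t : ℂ => torusAction n t v) (𝓝[≠] 0) (𝓝 0)} =
      {v : Fin 3 → ℂ | v 2 = 0} ∧
    {v : Fin 3 → ℂ |
        Tendsto (fun t : ℂ => torusAction n t v) (Bornology.cobounded ℂ) (𝓝 0)} =
      {v : Fin 3 → ℂ | v 0 = 0 ∧ v 1 = 0} ∧
    (∀ t : ℂ, t ≠ 0 → pointMap σ ∘ torusAction n t = torusAction n t ∘ pointMap σ) ∧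
    pointMap σ '' {v : Fin 3 → ℂ | v 2 = 0} = {v : Fin 3 → ℂ | v 2 = 0} := by
  have h0 : 0 < n 0 := lt_of_lt_of_le h1 h01
  -- the inverting case is impossible
  have hcomm : ∀ t : ℂ, t ≠ 0 →
      pointMap σ ∘ torusAction n t = torusAction n t ∘ pointMap σ := by
    rcases hnorm with h | h
    · exact h
    · exfalso
      set F : ℂ → ℂ → ℂ := fun a b => pointMap σ ![a, b, 0] 2 with hF
      refine no_injective_poly F (fun a => pointMap_slice σ a) ?_
      intro a b c d habcd
      have hz : ∀ x y : ℂ, (![x, y, 0] : Fin 3 → ℂ) 2 = 0 := by intro x y; simp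
      have h1' := inverting_maps_to_line n h0 h1 σ h ![a, b, 0] (hz a b)
      have h2' := inverting_maps_to_line n h0 h1 σ h ![c, d, 0] (hz c d)
      have heq : pointMap σ ![a, b, 0] = pointMap σ ![c, d, 0] := by
        funext i
        fin_cases i
        · show pointMap σ ![a, b, 0] 0 = pointMap σ ![c, d, 0] 0
          rw [h1'.1, h2'.1]
        · show pointMap σ ![a, b, 0] 1 = pointMap σ ![c, d, 0] 1
          rw [h1'.2, h2'.2]
        · exact habcd
      have := pointMap_injective σ heq
      constructor
      · simpa using congrFun this 0
      · simpa using congrFun this 1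
  -- the inverse automorphism also commutes
  have hcomm' : ∀ t : ℂ, t ≠ 0 →
      pointMap σ.symm ∘ torusAction n t = torusAction n t ∘ pointMap σ.symm := by
    intro t ht
    funext v
    have h1' := congrFun (hcomm t ht) (pointMap σ.symm v)
    simp only [Function.comp_apply, pointMap_comp_symm] at h1'
    have := congrArg (pointMap σ.symm) h1'
    rw [pointMap_symm_comp] at this
    simp only [Function.comp_apply]
    rw [← this]
  refine ⟨attracting_zero n h0 h1 h2, attracting_infty n h0 h1 h2, hcomm, ?_⟩
  ext w
  constructor
  · rintro ⟨v, hv, rfl⟩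
    exact commuting_maps_to_plane n h0 h1 h2 σ hcomm v hv
  · intro hw
    exact ⟨pointMap σ.symm w, commuting_maps_to_plane n h0 h1 h2 σ.symm hcomm' w hw,
      pointMap_comp_symm σ w⟩
end
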